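/- If P is a row-stochastic n×n matrix with all entries at least δ ∈ (0, 1/2], then the iterates x^{(k)} = P^k x^{(0)} converge: the range max_i x_i^{(k)} − min_i x_i^{(k)} ≤ (1−2δ)^k (max_i x_i^{(0)} − min_i x_i^{(0)}) tends to 0 geometrically, so all agents' values converge to a common limit. -/

import Mathlib

open Filter Topology

/-- Range (max minus min) of a vector on `Fin n`, `n > 0`. -/
noncomputable def vecRange {n : ℕ} (hn : 0 < n) (x : Fin n → ℝ) : ℝ :=
  Finset.univ.sup' (Finset.univ_nonempty_iff.mpr ⟨⟨0, hn⟩⟩) x -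
    Finset.univ.inf' (Finset.univ_nonempty_iff.mpr ⟨⟨0, hn⟩⟩) x

variable {n : ℕ}

private lemma univ_ne (hn : 0 < n) : (Finset.univ : Finset (Fin n)).Nonempty :=
  Finset.univ_nonempty_iff.mpr ⟨⟨0, hn⟩⟩

private lemma mulVec_upper (hn : 0 < n) {δ : ℝ} (hδ0 : 0 < δ)
    {P : Matrix (Fin n) (Fin n) ℝ}
    (hδP : ∀ i j, δ ≤ P i j) (hrow : ∀ i, ∑ j, P i j = 1)
    (x : Fin n → ℝ) (i : Fin n) :
    P.mulVec x i ≤ Finset.univ.sup' (univ_ne hn) x -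
      δ * (Finset.univ.sup' (univ_ne hn) x - Finset.univ.inf' (univ_ne hn) x) := by
  set M := Finset.univ.sup' (univ_ne hn) x with hM
  set m := Finset.univ.inf' (univ_ne hn) x with hm
  obtain ⟨j0, -, hj0⟩ := Finset.exists_mem_eq_inf' (univ_ne hn) x
  have hx_le : ∀ j, x j ≤ M := fun j => Finset.le_sup' x (Finset.mem_univ j)
  have hm_le : ∀ j, m ≤ x j := fun j => Finset.inf'_le x (Finset.mem_univ j)
  have hMm : 0 ≤ M - m := sub_nonneg.mpr ((hm_le j0).trans (hx_le j0))
  have key : ∑ j, P i j * x j = M - ∑ j, P i j * (M - x j) := by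
    have hsum : ∑ j, (P i j * x j + P i j * (M - x j)) = M := by
      have : ∀ j, P i j * x j + P i j * (M - x j) = P i j * M := fun j => by ring
      simp only [this]
      rw [← Finset.sum_mul, hrow i, one_mul]
    rw [Finset.sum_add_distrib] at hsum
    linarith
  have hterm : P i j0 * (M - x j0) ≤ ∑ j, P i j * (M - x j) := by
    apply Finset.single_le_sum (fun j _ => ?_) (Finset.mem_univ j0)
    exact mul_nonneg (le_of_lt (lt_of_lt_of_le hδ0 (hδP i j))) (sub_nonneg.mpr (hx_le j))
  have hδterm : δ * (M - m) ≤ P i j0 * (M - x j0) := by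
    have hxj0 : x j0 = m := hj0.symm
    rw [hxj0]
    exact mul_le_mul_of_nonneg_right (hδP i j0) hMm
  show ∑ j, P i j * x j ≤ M - δ * (M - m)
  rw [key]
  linarith [hδterm.trans hterm]

private lemma mulVec_lower (hn : 0 < n) {δ : ℝ} (hδ0 : 0 < δ)
    {P : Matrix (Fin n) (Fin n) ℝ}
    (hδP : ∀ i j, δ ≤ P i j) (hrow : ∀ i, ∑ j, P i j = 1)
    (x : Fin n → ℝ) (i : Fin n) :
    Finset.univ.inf' (univ_ne hn) x +
      δ * (Finset.univ.sup' (univ_ne hn) x - Finset.univ.inf' (univ_ne hn) x)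
      ≤ P.mulVec x i := by
  set M := Finset.univ.sup' (univ_ne hn) x with hM
  set m := Finset.univ.inf' (univ_ne hn) x with hm
  obtain ⟨j1, -, hj1⟩ := Finset.exists_mem_eq_sup' (univ_ne hn) x
  have hx_le : ∀ j, x j ≤ M := fun j => Finset.le_sup' x (Finset.mem_univ j)
  have hm_le : ∀ j, m ≤ x j := fun j => Finset.inf'_le x (Finset.mem_univ j)
  have hMm : 0 ≤ M - m := sub_nonneg.mpr ((hm_le j1).trans (hx_le j1))
  have key : ∑ j, P i j * x j = m + ∑ j, P i j * (x j - m) := by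
    have hsum : ∑ j, (P i j * m + P i j * (x j - m)) = ∑ j, P i j * x j := by
      congr 1; funext j; ring
    rw [Finset.sum_add_distrib, ← Finset.sum_mul, hrow i, one_mul] at hsum
    linarith
  have hterm : P i j1 * (x j1 - m) ≤ ∑ j, P i j * (x j - m) := by
    apply Finset.single_le_sum (fun j _ => ?_) (Finset.mem_univ j1)
    exact mul_nonneg (le_of_lt (lt_of_lt_of_le hδ0 (hδP i j))) (sub_nonneg.mpr (hm_le j))
  have hδterm : δ * (M - m) ≤ P i j1 * (x j1 - m) := by
    have hxj1 : x j1 = M := hj1.symm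
    rw [hxj1]
    exact mul_le_mul_of_nonneg_right (hδP i j1) hMm
  show m + δ * (M - m) ≤ ∑ j, P i j * x j
  rw [key]
  linarith [hδterm.trans hterm]

private lemma range_step (hn : 0 < n) {δ : ℝ} (hδ0 : 0 < δ)
    {P : Matrix (Fin n) (Fin n) ℝ}
    (hδP : ∀ i j, δ ≤ P i j) (hrow : ∀ i, ∑ j, P i j = 1)
    (x : Fin n → ℝ) :
    vecRange hn (P.mulVec x) ≤ (1 - 2 * δ) * vecRange hn x := by
  have h1 : Finset.univ.sup' (univ_ne hn) (P.mulVec x) ≤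
      Finset.univ.sup' (univ_ne hn) x -
        δ * (Finset.univ.sup' (univ_ne hn) x - Finset.univ.inf' (univ_ne hn) x) :=
    Finset.sup'_le _ _ fun i _ => mulVec_upper hn hδ0 hδP hrow x i
  have h2 : Finset.univ.inf' (univ_ne hn) x +
      δ * (Finset.univ.sup' (univ_ne hn) x - Finset.univ.inf' (univ_ne hn) x) ≤
      Finset.univ.inf' (univ_ne hn) (P.mulVec x) :=
    Finset.le_inf' _ _ fun i _ => mulVec_lower hn hδ0 hδP hrow x i
  unfold vecRange
  show Finset.univ.sup' (univ_ne hn) (P.mulVec x) - Finset.univ.inf' (univ_ne hn) (P.mulVec x) ≤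
    (1 - 2 * δ) * (Finset.univ.sup' (univ_ne hn) x - Finset.univ.inf' (univ_ne hn) x)
  linarith

/-- Geometric ergodicity: if `P` is row-stochastic with all entries at least
`δ ∈ (0, 1/2]`, then the range of `x^{(k)} = P^k x^{(0)}` is bounded by
`(1 − 2δ)^k` times the initial range, tends to `0`, and all agents' values converge to
a common limit. -/
theorem gossip_geometric_convergence {n : ℕ} (hn : 0 < n)
    (δ : ℝ) (hδ0 : 0 < δ) (hδ2 : δ ≤ 1 / 2)
    (P : Matrix (Fin n) (Fin n) ℝ)
    (hδP : ∀ i j, δ ≤ P i j) (hrow : ∀ i, ∑ j, P i j = 1)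
    (x₀ : Fin n → ℝ) :
    (∀ k : ℕ, vecRange hn ((P ^ k).mulVec x₀) ≤ (1 - 2 * δ) ^ k * vecRange hn x₀) ∧
      Tendsto (fun k : ℕ => vecRange hn ((P ^ k).mulVec x₀)) atTop (𝓝 0) ∧
      ∃ c : ℝ, ∀ i : Fin n, Tendsto (fun k : ℕ => (P ^ k).mulVec x₀ i) atTop (𝓝 c) := by
  have hne := univ_ne hn
  have hc0 : 0 ≤ 1 - 2 * δ := by linarith
  have hc1 : 1 - 2 * δ < 1 := by linarith
  -- range nonneg for any vector
  have hrng_nonneg : ∀ y : Fin n → ℝ, 0 ≤ vecRange hn y := by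
    intro y
    unfold vecRange
    have h := (Finset.inf'_le y (Finset.mem_univ ⟨0, hn⟩)).trans
      (Finset.le_sup' y (Finset.mem_univ ⟨0, hn⟩))
    linarith
  -- part 1
  have part1 : ∀ k : ℕ, vecRange hn ((P ^ k).mulVec x₀) ≤ (1 - 2 * δ) ^ k * vecRange hn x₀ := by
    intro k
    induction k with
    | zero => simp [Matrix.one_mulVec]
    | succ k ih =>
      have hrw : (P ^ (k+1)).mulVec x₀ = P.mulVec ((P ^ k).mulVec x₀) := by
        rw [pow_succ', Matrix.mulVec_mulVec]
      rw [hrw]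
      calc vecRange hn (P.mulVec ((P ^ k).mulVec x₀))
          ≤ (1 - 2 * δ) * vecRange hn ((P ^ k).mulVec x₀) :=
            range_step hn hδ0 hδP hrow _
        _ ≤ (1 - 2 * δ) * ((1 - 2 * δ) ^ k * vecRange hn x₀) :=
            mul_le_mul_of_nonneg_left ih hc0
        _ = (1 - 2 * δ) ^ (k+1) * vecRange hn x₀ := by ring
  refine ⟨part1, ?_, ?_⟩
  · -- tendsto 0
    have hgeo : Tendsto (fun k : ℕ => (1 - 2 * δ) ^ k * vecRange hn x₀) atTop (𝓝 0) := by
      have := tendsto_pow_atTop_nhds_zero_of_lt_one hc0 hc1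
      simpa using this.mul_const (vecRange hn x₀)
    exact squeeze_zero (fun k => hrng_nonneg _) part1 hgeo
  · -- common limit
    set m : ℕ → ℝ := fun k => Finset.univ.inf' hne ((P ^ k).mulVec x₀) with hmdef
    have hm_coord : ∀ k i, m k ≤ (P ^ k).mulVec x₀ i := fun k i =>
      Finset.inf'_le _ (Finset.mem_univ i)
    have hcoord_sub : ∀ k i, (P ^ k).mulVec x₀ i - m k ≤ vecRange hn ((P ^ k).mulVec x₀) := by
      intro k i
      unfold vecRange
      show (P ^ k).mulVec x₀ i - m k ≤
        Finset.univ.sup' hne ((P ^ k).mulVec x₀) - Finset.univ.inf' hne ((P ^ k).mulVec x₀)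
      have h1 := Finset.le_sup' ((P ^ k).mulVec x₀) (Finset.mem_univ i)
      have h2 : Finset.univ.inf' hne ((P ^ k).mulVec x₀) = m k := rfl
      linarith
    -- m monotone
    have hmono : Monotone m := by
      apply monotone_nat_of_le_succ
      intro k
      have hrw : (P ^ (k+1)).mulVec x₀ = P.mulVec ((P ^ k).mulVec x₀) := by
        rw [pow_succ', Matrix.mulVec_mulVec]
      have : ∀ i, m k ≤ (P ^ (k+1)).mulVec x₀ i := by
        intro i
        rw [hrw]
        have : m k = ∑ j, P i j * m k := by rw [← Finset.sum_mul, hrow i, one_mul]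
        rw [this]
        apply Finset.sum_le_sum
        intro j _
        exact mul_le_mul_of_nonneg_left (hm_coord k j)
          (le_of_lt (lt_of_lt_of_le hδ0 (hδP i j)))
      exact Finset.le_inf' _ _ fun i _ => this i
    -- bounded above
    have hS_anti : ∀ k, (∀ i, (P ^ k).mulVec x₀ i ≤ Finset.univ.sup' hne x₀) := by
      intro k
      induction k with
      | zero => intro i; simpa only [pow_zero, Matrix.one_mulVec] using Finset.le_sup' x₀ (Finset.mem_univ i)
      | succ k ih =>
        intro i
        have hrw : (P ^ (k+1)).mulVec x₀ = P.mulVec ((P ^ k).mulVec x₀) := by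
          rw [pow_succ', Matrix.mulVec_mulVec]
        rw [hrw]
        show ∑ j, P i j * (P ^ k).mulVec x₀ j ≤ _
        calc ∑ j, P i j * (P ^ k).mulVec x₀ j
            ≤ ∑ j, P i j * Finset.univ.sup' hne x₀ := by
              apply Finset.sum_le_sum
              intro j _
              exact mul_le_mul_of_nonneg_left (ih j)
                (le_of_lt (lt_of_lt_of_le hδ0 (hδP i j)))
          _ = Finset.univ.sup' hne x₀ := by rw [← Finset.sum_mul, hrow i, one_mul]
    have hbdd : BddAbove (Set.range m) := by
      refine ⟨Finset.univ.sup' hne x₀, ?_⟩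
      rintro _ ⟨k, rfl⟩
      exact (hm_coord k ⟨0, hn⟩).trans (hS_anti k ⟨0, hn⟩)
    have hm_tendsto := tendsto_atTop_ciSup hmono hbdd
    set c := ⨆ k, m k
    refine ⟨c, fun i => ?_⟩
    have hdiff : Tendsto (fun k => (P ^ k).mulVec x₀ i - m k) atTop (𝓝 0) := by
      apply squeeze_zero (fun k => sub_nonneg.mpr (hm_coord k i)) (fun k => hcoord_sub k i)
      have hgeo : Tendsto (fun k : ℕ => (1 - 2 * δ) ^ k * vecRange hn x₀) atTop (𝓝 0) := by
        have := tendsto_pow_atTop_nhds_zero_of_lt_one hc0 hc1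
        simpa using this.mul_const (vecRange hn x₀)
      exact squeeze_zero (fun k => hrng_nonneg _) part1 hgeo
    have := hdiff.add hm_tendsto
    simpa using this
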